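/- Let B, C be positive real constants. Let {ρ_N}_{N∈ℕ} be a sequence of positive real numbers with ρ_N → 0 and ρ_N·√N → ∞ as N → ∞, and let {φ_N}_{N∈ℕ} be a sequence of real numbers in the open interval (0,1) such that α := liminf_{N→∞} (−ln φ_N)/(N·ρ_N) > 0. Suppose there exist a constant K ∈ ℝ and N₀ ∈ ℕ such that for all N ≥ N₀: −ln(φ_N)/(N·ρ_N) − ln(N·C − N·ρ_N − ln φ_N)/(N·ρ_N) ≤ B/(C·N·ρ_N) + B·φ_N/ρ_N − B·φ_N/C + B/C + K/(N·ρ_N). Then limsup_{N→∞} (−ln φ_N)/(N·ρ_N) ≤ B/C. -/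

import Mathlib

open Filter
open scoped Topology

lemma aux_sqrt_add_le (x y : ℝ) (hx : 0 ≤ x) (hy : 0 ≤ y) :
    Real.sqrt (x + y) ≤ Real.sqrt x + Real.sqrt y := by
  rw [Real.sqrt_le_left (by positivity)]
  nlinarith [Real.sq_sqrt hx, Real.sq_sqrt hy, Real.sqrt_nonneg x, Real.sqrt_nonneg y]

lemma aux_log_le_two_sqrt {x : ℝ} (hx : 0 < x) : Real.log x ≤ 2 * Real.sqrt x := by
  have hs : 0 < Real.sqrt x := Real.sqrt_pos.2 hx
  have h1 : Real.log x = 2 * Real.log (Real.sqrt x) := by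
    rw [Real.log_sqrt hx.le]; ring
  have h2 := Real.log_le_sub_one_of_pos hs
  linarith

lemma aux_tendsto_sqrt_nat : Tendsto (fun N : ℕ => Real.sqrt N) atTop atTop := by
  apply Filter.tendsto_atTop_atTop.2
  intro b
  refine ⟨⌈b ^ 2⌉₊, fun n hn => ?_⟩
  have h1 : (b ^ 2 : ℝ) ≤ n := le_trans (Nat.le_ceil _) (Nat.cast_le.2 hn)
  calc b ≤ |b| := le_abs_self b
  _ = Real.sqrt (b ^ 2) := (Real.sqrt_sq_eq_abs b).symm
  _ ≤ Real.sqrt n := Real.sqrt_le_sqrt h1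

set_option maxHeartbeats 2000000 in
/-- analytic core of the converse: given the key inequality and a strictly
positive moderate deviations liminf, the moderate deviations limsup of `φ_N` is at most
`B/C`. -/
theorem moderate_deviations_converse_core (B C : ℝ) (hB : 0 < B) (hC : 0 < C)
    (ρ φ : ℕ → ℝ) (hρpos : ∀ N, 0 < ρ N)
    (hρ0 : Tendsto ρ atTop (𝓝 0))
    (hρsqrt : Tendsto (fun N : ℕ => ρ N * Real.sqrt N) atTop atTop)
    (hφ : ∀ N, φ N ∈ Set.Ioo (0 : ℝ) 1)
    (hα : (0 : EReal) <
      Filter.liminf (fun N : ℕ => ((-Real.log (φ N) / ((N : ℝ) * ρ N) : ℝ) : EReal)) atTop)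
    (K : ℝ) (N₀ : ℕ)
    (hineq : ∀ N : ℕ, N ≥ N₀ →
      -Real.log (φ N) / ((N : ℝ) * ρ N) -
        Real.log ((N : ℝ) * C - (N : ℝ) * ρ N - Real.log (φ N)) / ((N : ℝ) * ρ N) ≤
      B / (C * (N : ℝ) * ρ N) + B * φ N / ρ N - B * φ N / C + B / C +
        K / ((N : ℝ) * ρ N)) :
    Filter.limsup (fun N : ℕ => ((-Real.log (φ N) / ((N : ℝ) * ρ N) : ℝ) : EReal)) atTop ≤
      ((B / C : ℝ) : EReal) := by
  set a : ℕ → ℝ := fun N => -Real.log (φ N) / ((N : ℝ) * ρ N) with ha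
  -- N * ρ N → ∞
  have hNρ : Tendsto (fun N : ℕ => (N : ℝ) * ρ N) atTop atTop := by
    have h2 := aux_tendsto_sqrt_nat.atTop_mul_atTop₀ hρsqrt
    refine h2.congr fun N => ?_
    have hs : Real.sqrt N * Real.sqrt N = (N : ℝ) := Real.mul_self_sqrt (Nat.cast_nonneg N)
    calc Real.sqrt N * (ρ N * Real.sqrt N) = Real.sqrt N * Real.sqrt N * ρ N := by ring
    _ = (N : ℝ) * ρ N := by rw [hs]
  have hev1 : ∀ᶠ N : ℕ in atTop, 0 < (N : ℝ) * ρ N := hNρ.eventually_gt_atTop 0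
  have hevs : ∀ᶠ N : ℕ in atTop, 1 ≤ ρ N * Real.sqrt N := hρsqrt.eventually_ge_atTop 1
  -- a N > r > 0 eventually
  obtain ⟨c, hc0, hclt⟩ := exists_between hα
  lift c to ℝ using ⟨hclt.ne_top, hc0.ne_bot⟩ with r hr
  have hrpos : (0 : ℝ) < r := by exact_mod_cast hc0
  have hra : ∀ᶠ N : ℕ in atTop, r < a N := by
    have := Filter.eventually_lt_of_lt_liminf hclt
    exact this.mono fun N h => by exact_mod_cast h
  -- φ N ≤ exp(-(r * (N ρ N)))
  have hφe : ∀ᶠ N : ℕ in atTop, φ N ≤ Real.exp (-(r * ((N : ℝ) * ρ N))) := by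
    filter_upwards [hra, hev1] with N h1 h2
    have h3 : r * ((N : ℝ) * ρ N) < -Real.log (φ N) := (lt_div_iff₀ h2).1 h1
    have h4 : Real.log (φ N) < -(r * ((N : ℝ) * ρ N)) := by linarith
    calc φ N = Real.exp (Real.log (φ N)) := (Real.exp_log (hφ N).1).symm
    _ ≤ Real.exp (-(r * ((N : ℝ) * ρ N))) := Real.exp_le_exp.2 h4.le
  have hexp0 : Tendsto (fun N : ℕ => Real.exp (-(r * ((N : ℝ) * ρ N)))) atTop (𝓝 0) := by
    apply Real.tendsto_exp_atBot.comp
    exact tendsto_neg_atTop_atBot.comp (hNρ.const_mul_atTop hrpos)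
  have hφ0 : Tendsto φ atTop (𝓝 0) :=
    tendsto_of_tendsto_of_tendsto_of_le_of_le' tendsto_const_nhds hexp0
      (Eventually.of_forall fun N => (hφ N).1.le) hφe
  -- φ/ρ → 0
  have hgbase : Tendsto (fun y : ℝ => y * Real.exp (-y)) atTop (𝓝 0) := by
    simpa using Real.tendsto_pow_mul_exp_neg_atTop_nhds_zero 1
  have hg : Tendsto (fun x : ℝ => x * Real.exp (-(r * x))) atTop (𝓝 0) := by
    have h1 := (hgbase.comp (tendsto_id.const_mul_atTop hrpos)).const_mul (1 / r)
    rw [mul_zero] at h1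
    refine h1.congr fun x => ?_
    show 1 / r * (r * x * Real.exp (-(r * x))) = x * Real.exp (-(r * x))
    rw [← mul_assoc, ← mul_assoc, one_div_mul_cancel hrpos.ne', one_mul]
  have hgN : Tendsto (fun N : ℕ => Real.sqrt N * Real.exp (-(r * Real.sqrt N))) atTop (𝓝 0) :=
    hg.comp aux_tendsto_sqrt_nat
  have hφρ : Tendsto (fun N : ℕ => φ N / ρ N) atTop (𝓝 0) := by
    apply tendsto_of_tendsto_of_tendsto_of_le_of_le' tendsto_const_nhds hgN
    · exact Eventually.of_forall fun N => div_nonneg (hφ N).1.le (hρpos N).le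
    · filter_upwards [hφe, hevs] with N h1 h2
      have hsN : 0 < Real.sqrt N := by nlinarith [Real.sqrt_nonneg (N:ℝ), hρpos N]
      have hs : Real.sqrt N * Real.sqrt N = (N : ℝ) := Real.mul_self_sqrt (Nat.cast_nonneg N)
      have hNge : Real.sqrt N ≤ (N : ℝ) * ρ N := by nlinarith
      have hinv : 1 / ρ N ≤ Real.sqrt N := by
        rw [div_le_iff₀ (hρpos N)]
        nlinarith
      calc φ N / ρ N ≤ Real.exp (-(r * ((N : ℝ) * ρ N))) / ρ N :=
            (div_le_div_iff_of_pos_right (hρpos N)).2 h1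
      _ = Real.exp (-(r * ((N : ℝ) * ρ N))) * (1 / ρ N) := by ring
      _ ≤ Real.exp (-(r * Real.sqrt N)) * Real.sqrt N := by
          apply mul_le_mul (Real.exp_le_exp.2 (by nlinarith)) hinv
            (one_div_nonneg.2 (hρpos N).le) (Real.exp_pos _).le
      _ = Real.sqrt N * Real.exp (-(r * Real.sqrt N)) := by ring
  -- RHS tends to B/C
  have hR : Tendsto (fun N : ℕ => B / (C * (N : ℝ) * ρ N) + B * φ N / ρ N - B * φ N / C +
      B / C + K / ((N : ℝ) * ρ N)) atTop (𝓝 (B / C)) := by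
    have h1 : Tendsto (fun N : ℕ => B / (C * (N : ℝ) * ρ N)) atTop (𝓝 0) := by
      apply Tendsto.div_atTop tendsto_const_nhds
      refine (hNρ.const_mul_atTop hC).congr fun N => by ring
    have h2 : Tendsto (fun N : ℕ => B * φ N / ρ N) atTop (𝓝 0) := by
      have h := hφρ.const_mul B
      rw [mul_zero] at h
      exact h.congr fun N => by ring
    have h3 : Tendsto (fun N : ℕ => B * φ N / C) atTop (𝓝 0) := by
      have h := hφ0.const_mul (B / C)
      rw [mul_zero] at h
      refine h.congr fun N => ?_
      field_simp
    have h5 : Tendsto (fun N : ℕ => K / ((N : ℝ) * ρ N)) atTop (𝓝 0) :=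
      Tendsto.div_atTop tendsto_const_nhds hNρ
    have h6 := (((h1.add h2).sub h3).add (tendsto_const_nhds (x := B / C))).add h5
    simpa using h6
  -- rearranged key inequality
  have hkey : ∀ᶠ N : ℕ in atTop, a N ≤
      Real.log ((N : ℝ) * C - (N : ℝ) * ρ N - Real.log (φ N)) / ((N : ℝ) * ρ N) +
      (B / (C * (N : ℝ) * ρ N) + B * φ N / ρ N - B * φ N / C + B / C +
        K / ((N : ℝ) * ρ N)) := by
    filter_upwards [eventually_ge_atTop N₀] with N hN
    have h := hineq N hN
    have h0 : a N = -Real.log (φ N) / ((N : ℝ) * ρ N) := rfl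
    linarith
  -- eventual bound 2√(CN)/(Nρ) ≤ 1
  have hev2C : ∀ᶠ N : ℕ in atTop, 2 * Real.sqrt (C * N) / ((N : ℝ) * ρ N) ≤ 1 := by
    filter_upwards [hρsqrt.eventually_ge_atTop (2 * Real.sqrt C + 1), eventually_ge_atTop 1,
      hev1] with N h1 hN ht
    have hNpos : (0 : ℝ) < N := by exact_mod_cast hN
    have hsN : 0 < Real.sqrt N := Real.sqrt_pos.2 hNpos
    have hs : Real.sqrt N * Real.sqrt N = (N : ℝ) := Real.mul_self_sqrt (Nat.cast_nonneg N)
    rw [Real.sqrt_mul hC.le, div_le_one ht]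
    have h2 : 2 * Real.sqrt C ≤ ρ N * Real.sqrt N := by linarith
    nlinarith [mul_le_mul_of_nonneg_right h2 hsN.le]
  -- eventual boundedness of a
  have hM : ∀ᶠ N : ℕ in atTop, a N ≤ 2 * (B / C) + 10 := by
    filter_upwards [hkey, hev2C, hR.eventually (eventually_le_nhds (lt_add_one (B / C))),
      hev1, hNρ.eventually_ge_atTop 1, hra, hρ0.eventually (eventually_lt_nhds hC),
      eventually_ge_atTop 1] with N hk h2C hRle ht ht1 hrN hρC hN1
    have haN : 0 < a N := hrpos.trans hrN
    have hlogeq : a N * ((N : ℝ) * ρ N) = -Real.log (φ N) := div_mul_cancel₀ _ ht.ne'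
    have hN0 : (1 : ℝ) ≤ (N : ℝ) := by exact_mod_cast hN1
    have h5 : 0 ≤ (N : ℝ) * (C - ρ N) := mul_nonneg (Nat.cast_nonneg N) (sub_pos.2 hρC).le
    have h6 : 0 < a N * ((N : ℝ) * ρ N) := mul_pos haN ht
    have hxpos : 0 < (N : ℝ) * C - (N : ℝ) * ρ N - Real.log (φ N) := by nlinarith
    have hxle : (N : ℝ) * C - (N : ℝ) * ρ N - Real.log (φ N) ≤
        C * (N : ℝ) + a N * ((N : ℝ) * ρ N) := by nlinarith
    have hlogx : Real.log ((N : ℝ) * C - (N : ℝ) * ρ N - Real.log (φ N)) ≤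
        2 * Real.sqrt (C * (N : ℝ)) + 2 * Real.sqrt (a N * ((N : ℝ) * ρ N)) := by
      have e1 := aux_log_le_two_sqrt hxpos
      have e2 : Real.sqrt ((N : ℝ) * C - (N : ℝ) * ρ N - Real.log (φ N)) ≤
          Real.sqrt (C * (N : ℝ) + a N * ((N : ℝ) * ρ N)) := Real.sqrt_le_sqrt hxle
      have e3 := aux_sqrt_add_le (C * (N : ℝ)) (a N * ((N : ℝ) * ρ N))
        (by positivity) h6.le
      linarith
    have hsq2 : 2 * Real.sqrt (a N * ((N : ℝ) * ρ N)) ≤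
        (a N / 2 + 2) * ((N : ℝ) * ρ N) := by
      rw [Real.sqrt_mul haN.le]
      have h7 := Real.sq_sqrt haN.le
      have h8 := Real.sq_sqrt ht.le
      have hst : 1 ≤ Real.sqrt ((N : ℝ) * ρ N) := Real.one_le_sqrt.2 ht1
      have h9 : Real.sqrt ((N : ℝ) * ρ N) ≤ (N : ℝ) * ρ N := by nlinarith
      have h10 : 2 * Real.sqrt (a N) ≤ a N / 2 + 2 := by
        nlinarith [sq_nonneg (Real.sqrt (a N) - 2)]
      have h11 := mul_le_mul_of_nonneg_right h10 (Real.sqrt_nonneg ((N : ℝ) * ρ N))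
      have h12 : (0 : ℝ) ≤ a N / 2 + 2 := by positivity
      nlinarith [mul_le_mul_of_nonneg_left h9 h12]
    have hdiv : Real.log ((N : ℝ) * C - (N : ℝ) * ρ N - Real.log (φ N)) / ((N : ℝ) * ρ N) ≤
        2 * Real.sqrt (C * (N : ℝ)) / ((N : ℝ) * ρ N) + (a N / 2 + 2) := by
      have e4 : Real.log ((N : ℝ) * C - (N : ℝ) * ρ N - Real.log (φ N)) ≤
          2 * Real.sqrt (C * (N : ℝ)) + (a N / 2 + 2) * ((N : ℝ) * ρ N) := by linarith
      calc Real.log ((N : ℝ) * C - (N : ℝ) * ρ N - Real.log (φ N)) / ((N : ℝ) * ρ N)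
          ≤ (2 * Real.sqrt (C * (N : ℝ)) + (a N / 2 + 2) * ((N : ℝ) * ρ N)) / ((N : ℝ) * ρ N) :=
            (div_le_div_iff_of_pos_right ht).2 e4
      _ = 2 * Real.sqrt (C * (N : ℝ)) / ((N : ℝ) * ρ N) + (a N / 2 + 2) := by
            rw [add_div, mul_div_cancel_right₀ _ ht.ne']
    linarith
  -- for every ε > 0, eventually a N ≤ B/C + ε
  have hfinal : ∀ ε : ℝ, 0 < ε → ∀ᶠ N : ℕ in atTop, a N ≤ B / C + ε := by
    intro ε hε
    have hBC : 0 < B / C := div_pos hB hC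
    set D : ℝ := C + (2 * (B / C) + 10) with hD
    have hD1 : 1 ≤ D := by rw [hD]; nlinarith
    have hlogdiv : Tendsto (fun y : ℝ => Real.log y / y) atTop (𝓝 0) :=
      Real.isLittleO_log_id_atTop.tendsto_div_nhds_zero
    have h11 : Tendsto (fun N : ℕ => Real.log (Real.sqrt N) / Real.sqrt N) atTop (𝓝 0) :=
      hlogdiv.comp aux_tendsto_sqrt_nat
    have h12 : Tendsto (fun N : ℕ => Real.log N / Real.sqrt N) atTop (𝓝 0) := by
      have h := h11.const_mul 2
      rw [mul_zero] at h
      refine h.congr' ?_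
      filter_upwards [eventually_ge_atTop 1] with N hN
      have hl : Real.log (Real.sqrt N) = Real.log N / 2 := Real.log_sqrt (Nat.cast_nonneg N)
      rw [hl]; ring
    have h13 : Tendsto (fun N : ℕ => Real.log D / Real.sqrt N) atTop (𝓝 0) :=
      Tendsto.div_atTop tendsto_const_nhds aux_tendsto_sqrt_nat
    have hub : Tendsto (fun N : ℕ => Real.log N / Real.sqrt N + Real.log D / Real.sqrt N)
        atTop (𝓝 0) := by simpa using h12.add h13
    filter_upwards [hkey, hM, hub.eventually (eventually_le_nhds (half_pos hε)),
      hR.eventually (eventually_le_nhds (by linarith : B / C < B / C + ε / 2)),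
      hev1, hevs, hρ0.eventually (eventually_le_nhds (zero_lt_one' ℝ)),
      hρ0.eventually (eventually_lt_nhds hC),
      hra, eventually_ge_atTop 1] with N hk hMN hubN hRN ht hsNρ hρ1 hρC hrN hN1
    have hNpos : (0 : ℝ) < N := by exact_mod_cast hN1
    have hsN : 0 < Real.sqrt N := Real.sqrt_pos.2 hNpos
    have hs : Real.sqrt N * Real.sqrt N = (N : ℝ) := Real.mul_self_sqrt (Nat.cast_nonneg N)
    have haN : 0 < a N := hrpos.trans hrN
    have hlogeq : a N * ((N : ℝ) * ρ N) = -Real.log (φ N) := div_mul_cancel₀ _ ht.ne'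
    have hxpos : 0 < (N : ℝ) * C - (N : ℝ) * ρ N - Real.log (φ N) := by
      nlinarith [mul_nonneg (Nat.cast_nonneg N : (0 : ℝ) ≤ N) (sub_pos.2 hρC).le,
        mul_pos haN ht]
    have hxle : (N : ℝ) * C - (N : ℝ) * ρ N - Real.log (φ N) ≤ (N : ℝ) * D := by
      have h1 : a N * ((N : ℝ) * ρ N) ≤ (2 * (B / C) + 10) * ((N : ℝ) * ρ N) :=
        mul_le_mul_of_nonneg_right hMN ht.le
      have h2 : (N : ℝ) * ρ N ≤ (N : ℝ) := by nlinarith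
      have hMpos : (0 : ℝ) < 2 * (B / C) + 10 := by positivity
      rw [hD]
      nlinarith [mul_le_mul_of_nonneg_left h2 hMpos.le]
    have hN0 : (1 : ℝ) ≤ (N : ℝ) := by exact_mod_cast hN1
    have hND1 : 1 ≤ (N : ℝ) * D := by nlinarith [hD1, hN0]
    have hlx : Real.log ((N : ℝ) * C - (N : ℝ) * ρ N - Real.log (φ N)) ≤
        Real.log ((N : ℝ) * D) := Real.log_le_log hxpos hxle
    have hsqle : Real.sqrt N ≤ (N : ℝ) * ρ N := by nlinarith [hsN.le]
    have hdiv2 : Real.log ((N : ℝ) * C - (N : ℝ) * ρ N - Real.log (φ N)) / ((N : ℝ) * ρ N) ≤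
        Real.log ((N : ℝ) * D) / Real.sqrt N :=
      div_le_div₀ (Real.log_nonneg hND1) hlx hsN hsqle
    have hsplit : Real.log ((N : ℝ) * D) / Real.sqrt N =
        Real.log N / Real.sqrt N + Real.log D / Real.sqrt N := by
      rw [Real.log_mul (ne_of_gt hNpos) (ne_of_gt (lt_of_lt_of_le one_pos hD1)), add_div]
    linarith [hk, hRN, hubN, hdiv2, hsplit.le, hsplit.ge]
  -- conclusion
  by_contra hcon
  push_neg at hcon
  obtain ⟨d, hd1, hd2⟩ := EReal.exists_between_coe_real hcon
  have hdR : B / C < d := by exact_mod_cast hd1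
  have hε : 0 < d - B / C := by linarith
  have hev := hfinal (d - B / C) hε
  have hls : Filter.limsup (fun N : ℕ => ((-Real.log (φ N) / ((N : ℝ) * ρ N) : ℝ) : EReal))
      atTop ≤ (d : EReal) := by
    apply Filter.limsup_le_of_le (by isBoundedDefault)
    filter_upwards [hev] with N h
    have h' : a N ≤ d := by linarith
    exact EReal.coe_le_coe_iff.2 h'
  exact absurd hls (not_le.2 hd2)
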